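/- If the m×n matrix M has rank r and its row space V satisfies ψ(V) ≥ t (every nonzero vector of the row space has at least t nonzero coordinates), then whenever there exists a column of M not contained in the span of a given set of columns spanning a proper subspace of the column space, there exist at least t such columns. -/
import Mathlib


open scoped Classical in
/-- Let `M` be an `m×n` matrix of rank `r` whose row space `V` satisfies `ψ(V) ≥ t`
(every nonzero vector of the span of the rows has at least `t` nonzero coordinates).
If `U'` is a proper subspace of the column space of `M` (so some column lies outside
`U'`), then there are at least `t` columns of `M` not contained in `U'`. -/
theorem num_active_columns_ge
    {m n r t : ℕ} (M : Matrix (Fin m) (Fin n) ℝ) (hrank : M.rank = r)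
    (hrow : ∀ x ∈ Submodule.span ℝ (Set.range M), x ≠ 0 →
      t ≤ (Finset.univ.filter fun j => x j ≠ 0).card)
    (U' : Submodule ℝ (Fin m → ℝ))
    (hU' : U' < Submodule.span ℝ (Set.range M.transpose)) :
    t ≤ (Finset.univ.filter fun j : Fin n => (fun i => M i j) ∉ U').card := by
  -- find a column outside U'
  have hnotle : ¬ Submodule.span ℝ (Set.range M.transpose) ≤ U' := fun h =>
    (lt_irrefl _ (lt_of_lt_of_le hU' h))
  rw [Submodule.span_le] at hnotle
  obtain ⟨v, ⟨j0, hj0⟩, hv⟩ : ∃ v ∈ Set.range M.transpose, v ∉ (U' : Set (Fin m → ℝ)) := by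
    by_contra h
    push_neg at h
    exact hnotle h
  obtain ⟨f, hfv, hmap⟩ := U'.exists_dual_map_eq_bot_of_notMem hv inferInstance
  have hfU : ∀ u ∈ U', f u = 0 := by
    intro u hu
    have : f u ∈ U'.map f := Submodule.mem_map_of_mem hu
    rwa [hmap, Submodule.mem_bot] at this
  set x : Fin n → ℝ := fun j => f (fun i => M i j) with hx
  have hxmem : x ∈ Submodule.span ℝ (Set.range M) := by
    have hxeq : x = ∑ i, f (Pi.single i 1) • M i := by
      funext j
      have hcol : (fun i => M i j) = ∑ i : Fin m, M i j • (Pi.single i 1 : Fin m → ℝ) := by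
        have := pi_eq_sum_univ (fun i => M i j)
        convert this using 3 with i
        funext k
        simp [Pi.single_apply, eq_comm]
      calc x j = f (fun i => M i j) := rfl
        _ = ∑ i : Fin m, M i j * f (Pi.single i 1) := by
              rw [hcol]; simp [mul_comm]
        _ = (∑ i, f (Pi.single i 1) • M i) j := by
              simp [Finset.sum_apply, mul_comm]
    rw [hxeq]
    exact Submodule.sum_mem _ fun i _ =>
      Submodule.smul_mem _ _ (Submodule.subset_span ⟨i, rfl⟩)
  have hxne : x ≠ 0 := by
    intro h
    have h0 : x j0 = 0 := by rw [h]; rfl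
    have hvj : v = fun i => M i j0 := by
      funext i; rw [← hj0]; rfl
    rw [hx] at h0
    simp only [← hvj] at h0
    exact hfv h0
  refine le_trans (hrow x hxmem hxne) (Finset.card_le_card ?_)
  intro j hj
  simp only [Finset.mem_filter, Finset.mem_univ, true_and] at hj ⊢
  intro hmem
  exact hj (hfU _ hmem)
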